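/- Let p be a prime, K a field of characteristic p, and let A be a finite-dimensional graded commutative K-algebra with a degree map deg : A^d → K inducing a nondegenerate (Gorenstein) pairing. Suppose that multiplication by ℓ^{d−pm} composed with the Frobenius power map g ↦ g^p is anisotropic on A^m, i.e., deg(ℓ^{d−pm}·g^p) ≠ 0 for all nonzero g ∈ A^m. Then the multiplication map ℓ^{d−pm} : A^m → A^{d−(p−1)m} is injective, and in particular multiplication by ℓ : A^m → A^{m+1} is injective whenever m ≤ (d−1)/p. -/
import Mathlib


/-- Let `K` be a field of characteristic `p` and `A` a finite-dimensional graded commutative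
`K`-algebra with degree map `D` inducing a nondegenerate pairing.  If the form
`g ↦ D(ℓ^{d−pm}·g^p)` is anisotropic on `A^m`, then multiplication by `ℓ^{d−pm}` is injective
on `A^m`, and in particular multiplication by `ℓ` is injective on `A^m` whenever
`m ≤ (d−1)/p` (i.e., `pm + 1 ≤ d`). -/
theorem stmt_18 (p : ℕ) (hp : p.Prime) (K : Type*) [Field K] [CharP K p]
    (A : Type*) [CommRing A] [Algebra K A] (d : ℕ) (𝒜 : ℕ → Submodule K A)
    [GradedAlgebra 𝒜] [FiniteDimensional K A]
    (D : A →ₗ[K] K)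
    (hnd : ∀ a : A, a ≠ 0 → ∃ b : A, D (a * b) ≠ 0)
    (l : A) (hl : l ∈ 𝒜 1) (m : ℕ) (hmd : p * m ≤ d)
    (haniso : ∀ g : A, g ∈ 𝒜 m → g ≠ 0 → D (l ^ (d - p * m) * g ^ p) ≠ 0) :
    (∀ g ∈ 𝒜 m, l ^ (d - p * m) * g = 0 → g = 0) ∧
      (p * m + 1 ≤ d → ∀ g ∈ 𝒜 m, l * g = 0 → g = 0) := by
  have key : ∀ g ∈ 𝒜 m, l ^ (d - p * m) * g = 0 → g = 0 := by
    intro g hg hz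
    by_contra hne
    apply haniso g hg hne
    have hpp := hp.pos
    have hp1 : p = 1 + (p - 1) := by omega
    have : g ^ p = g * g ^ (p - 1) := by
      conv_lhs => rw [hp1]
      rw [pow_add, pow_one]
    rw [this, ← mul_assoc, hz, zero_mul, map_zero]
  refine ⟨key, ?_⟩
  intro hd g hg hz
  apply key g hg
  have h1 : d - p * m = (d - p * m - 1) + 1 := by omega
  rw [h1, pow_succ, mul_assoc, hz, mul_zero]
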